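/- For η > 0 and θ ∈ (−π/2, 0), with r_η(θ) = (η − √(η² + 4sin²θ))/(2 sinθ), one has sup_{θ∈(−π/2,0)} r_η(θ)² = (√(1 + η²/4) − η/2)², and if v* denotes this supremum then (1 − v*)² = η² v*. -/

import Mathlib

/-- The radial function `r_η(θ)` parametrizing `|m(E_η(θ) + iη)|`. -/
noncomputable def rEta (η θ : ℝ) : ℝ :=
  (η - Real.sqrt (η ^ 2 + 4 * Real.sin θ ^ 2)) / (2 * Real.sin θ)

theorem stmt_14 (η : ℝ) (hη : 0 < η) :
    sSup ((fun θ => (rEta η θ) ^ 2) '' Set.Ioo (-(Real.pi / 2)) 0)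
        = (Real.sqrt (1 + η ^ 2 / 4) - η / 2) ^ 2 ∧
      (1 - (Real.sqrt (1 + η ^ 2 / 4) - η / 2) ^ 2) ^ 2
        = η ^ 2 * (Real.sqrt (1 + η ^ 2 / 4) - η / 2) ^ 2 := by
  set B : ℝ := Real.sqrt (η ^ 2 + 4) with hBdef
  have hB0 : 0 ≤ B := Real.sqrt_nonneg _
  have hB2 : B ^ 2 = η ^ 2 + 4 := Real.sq_sqrt (by positivity)
  have hBη : η < B := by nlinarith
  have hsq : Real.sqrt (1 + η ^ 2 / 4) = B / 2 := by
    rw [show (1 : ℝ) + η ^ 2 / 4 = (B / 2) ^ 2 by nlinarith]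
    exact Real.sqrt_sq (by positivity)
  rw [hsq]
  constructor
  · -- the supremum computation
    have hne : (Set.Ioo (-(Real.pi / 2)) (0:ℝ)).Nonempty :=
      Set.nonempty_Ioo.2 (by nlinarith [Real.pi_pos])
    apply csSup_eq_of_forall_le_of_forall_lt_exists_gt (hne.image _)
    · -- upper bound
      rintro x ⟨θ, ⟨hθl, hθr⟩, rfl⟩
      set s : ℝ := Real.sin θ with hsdef
      have hs0 : s < 0 := Real.sin_neg_of_neg_of_neg_pi_lt hθr
        (by nlinarith [Real.pi_pos])
      have hs1 : s ^ 2 ≤ 1 := Real.sin_sq_le_one θ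
      set A : ℝ := Real.sqrt (η ^ 2 + 4 * s ^ 2) with hAdef
      have hA0 : 0 ≤ A := Real.sqrt_nonneg _
      have hA2 : A ^ 2 = η ^ 2 + 4 * s ^ 2 := Real.sq_sqrt (by positivity)
      have hAη : η ≤ A := by nlinarith
      -- key inequality : A ≥ η + s² (B - η)
      have hx0 : 0 < η + s ^ 2 * (B - η) := by
        nlinarith [mul_nonneg (sq_nonneg s) (sub_nonneg.2 hBη.le)]
      have hxsq : (η + s ^ 2 * (B - η)) ^ 2 ≤ A ^ 2 := by
        nlinarith [mul_nonneg (mul_nonneg (sq_nonneg s)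
          (by nlinarith [Real.sin_sq_le_one θ] : (0:ℝ) ≤ 1 - s ^ 2)) (sq_nonneg (B - η))]
      have key : η + s ^ 2 * (B - η) ≤ A := by
        have h := Real.sqrt_le_sqrt hxsq
        rwa [Real.sqrt_sq hx0.le, Real.sqrt_sq hA0] at h
      have hs2pos : (0:ℝ) < (2 * s) ^ 2 := by nlinarith [mul_pos (neg_pos.2 hs0) (neg_pos.2 hs0)]
      have hB2s : s ^ 2 * B ^ 2 = s ^ 2 * (η ^ 2 + 4) := by rw [hB2]
      simp only [rEta, ← hsdef, ← hAdef]
      rw [div_pow, div_le_iff₀ hs2pos]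
      nlinarith [mul_nonneg hη.le (sub_nonneg.2 key), hA2, hB2s]
    · -- values approach the supremum
      intro w hw
      set φ : ℝ → ℝ := fun t => ((Real.sqrt (η ^ 2 + 4 * t ^ 2) - η) / (2 * t)) ^ 2 with hφdef
      have hφ1 : φ 1 = ((B - η) / 2) ^ 2 := by
        simp only [φ]
        norm_num
        rw [hBdef]
      have hcont : ContinuousAt φ 1 := by
        apply ContinuousAt.pow
        apply ContinuousAt.div
        · exact ((Real.continuous_sqrt.comp (by continuity)).continuousAt).sub continuousAt_const
        · exact (continuous_const.mul continuous_id).continuousAt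
        · norm_num
      have hφ1' : ((B - η) / 2) ^ 2 = (B / 2 - η / 2) ^ 2 := by ring
      have htend : Filter.Tendsto φ (nhdsWithin 1 (Set.Ioo (0:ℝ) 1)) (nhds ((B / 2 - η / 2) ^ 2)) := by
        rw [← hφ1', ← hφ1]
        exact hcont.continuousWithinAt.tendsto
      have : ∀ᶠ t in nhdsWithin 1 (Set.Ioo (0:ℝ) 1), w < φ t :=
        htend.eventually (eventually_gt_nhds hw)
      have hNB : (nhdsWithin (1:ℝ) (Set.Ioo (0:ℝ) 1)).NeBot :=
        right_nhdsWithin_Ioo_neBot one_pos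
      obtain ⟨t, htw, ht01⟩ := (this.and eventually_mem_nhdsWithin).exists
      obtain ⟨ht0, ht1⟩ := ht01
      refine ⟨φ t, ⟨Real.arcsin (-t), ?_, ?_⟩, htw⟩
      · have hlt : Real.arcsin t < Real.pi / 2 := Real.arcsin_lt_pi_div_two.2 ht1
        have hpos : 0 < Real.arcsin t := Real.arcsin_pos.2 ht0
        rw [Real.arcsin_neg]
        exact ⟨by linarith, by linarith⟩
      · have hsin : Real.sin (Real.arcsin (-t)) = -t :=
          Real.sin_arcsin (by linarith) (by linarith)
        simp only [rEta, hsin]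
        rw [show η ^ 2 + 4 * (-t) ^ 2 = η ^ 2 + 4 * t ^ 2 by ring]
        simp only [φ]
        field_simp
        ring
  · -- the algebraic identity for the supremum value
    linear_combination (-(1 - (B / 2 - η / 2) ^ 2 + η * (B / 2 - η / 2)) / 4) * hB2
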